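/- (Irregular posterior convergence for the shifted exponential family.) For θ ∈ R, let F_θ(x) = (1 − e^{−(x−θ)}) ∨ 0 and let X_1, X_2, ... be an i.i.d. sample from F_{θ_0} for some θ_0 ∈ R. Let π : R → (0,∞) be a continuous Lebesgue probability density, used as prior. Then the associated posterior distribution satisfies sup_A |Π_n(θ ∈ A | X_1,...,X_n) − Exp⁻_{θ̂_n, n}(A)| → 0 in P_{θ_0}-probability, where θ̂_n = X_(1) = min{X_1,...,X_n} is the maximum likelihood estimate of θ_0 and the supremum runs over all Borel sets A ⊂ R. -/

import Mathlib

open MeasureTheory Filter Topology Real Asymptotics ProbabilityTheory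

namespace Paper

variable {𝒳 : Type*} [MeasurableSpace 𝒳]

/-- Joint law of an i.i.d. sample of size `n` from `P`. -/
noncomputable def jointLaw (P : Measure 𝒳) (n : ℕ) : Measure (Fin n → 𝒳) :=
  Measure.pi fun _ => P

/-- `R n → 0` in `P₀`-probability under the i.i.d. joint law: the `o_{P₀}(1)` property. -/
def smallOP (P₀ : Measure 𝒳) (R : (n : ℕ) → (Fin n → 𝒳) → ℝ) : Prop :=
  ∀ ε : ℝ, 0 < ε → Tendsto (fun n => jointLaw P₀ n {x | ε ≤ |R n x|}) atTop (𝓝 0)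

/-- Bounded in `P₀`-probability: the `O_{P₀}(1)` property for a stochastic sequence. -/
def boundedOP (P₀ : Measure 𝒳) {E : Type*} [Norm E]
    (h : (n : ℕ) → (Fin n → 𝒳) → E) : Prop :=
  ∀ ε : ℝ, 0 < ε → ∃ M : ℝ, 0 < M ∧
    ∀ n, jointLaw P₀ n {x | M < ‖h n x‖} ≤ ENNReal.ofReal ε

/-- Weak convergence of the laws of the statistics `T n` under `Q n` to the law `L`. -/
def weakLim {E : Type*} [TopologicalSpace E] [MeasurableSpace E]
    (Q : (n : ℕ) → Measure (Fin n → 𝒳)) (T : (n : ℕ) → (Fin n → 𝒳) → E)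
    (L : Measure E) : Prop :=
  ∀ f : BoundedContinuousFunction E ℝ,
    Tendsto (fun n => ∫ x, f (T n x) ∂(Q n)) atTop (𝓝 (∫ y, f y ∂L))

/-- Density of the shifted (standard) exponential distribution `F_θ`. -/
noncomputable def pexp (θ x : ℝ) : ℝ := if θ ≤ x then Real.exp (-(x - θ)) else 0

/-- The shifted exponential distribution with support boundary `θ`. -/
noncomputable def Pexp (θ : ℝ) : Measure ℝ :=
  (volume : Measure ℝ).withDensity fun x => ENNReal.ofReal (pexp θ x)

/-- The negative exponential location-scale distribution `Exp⁻_{Δ,λ}`, with Lebesgue density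
`x ↦ λ e^{-λ(Δ - x)} 1{x ≤ Δ}`. -/
noncomputable def expNeg (Δ lam : ℝ) : Measure ℝ :=
  (volume : Measure ℝ).withDensity fun x =>
    ENNReal.ofReal (if x ≤ Δ then lam * Real.exp (-lam * (Δ - x)) else 0)

/-- Posterior for the shifted exponential model with prior Lebesgue density `dens`. -/
noncomputable def postExp (dens : ℝ → ℝ) {n : ℕ} (x : Fin n → ℝ) (A : Set ℝ) : ℝ :=
  (∫ θ in A, (∏ i, pexp θ (x i)) * dens θ) / ∫ θ, (∏ i, pexp θ (x i)) * dens θ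


open Set in
private theorem int_g (n : ℕ) (hn : 1 ≤ n) (m : ℝ) :
    ∫ θ in Iic m, (n:ℝ) * Real.exp (n*(θ - m)) = 1 := by
  have hn' : (0:ℝ) < n := by exact_mod_cast hn
  set H : ℝ → ℝ := fun u => Real.exp (-u - n*m) with hH
  have e1 := integral_comp_neg_Iic m (fun y => H ((n:ℝ) * y))
  have e2 := integral_comp_mul_left_Ioi H (-m) hn'
  have h1 : ∫ θ in Iic m, Real.exp ((n:ℝ)*(θ - m)) = 1 / n := by
    have l : ∫ θ in Iic m, Real.exp ((n:ℝ)*(θ - m))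
        = ∫ x in Iic m, (fun y => H ((n:ℝ) * y)) (-x) := by
      refine setIntegral_congr_fun measurableSet_Iic fun θ _ => ?_
      simp only [hH]; congr 1; ring
    have r : ∫ u in Ioi ((n:ℝ) * (-m)), H u = 1 := by
      have : ∀ u : ℝ, H u = Real.exp (-((n:ℝ)*m)) * Real.exp (-u) := by
        intro u; simp only [hH, ← Real.exp_add]; congr 1; ring
      simp_rw [this]
      rw [integral_const_mul, integral_exp_neg_Ioi, ← Real.exp_add]
      norm_num
    rw [l, e1, e2, r, smul_eq_mul, mul_one, one_div]
  rw [integral_const_mul, h1]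
  field_simp

open Set in
private theorem intOn_g (n : ℕ) (hn : 1 ≤ n) (m : ℝ) :
    IntegrableOn (fun θ => (n:ℝ) * Real.exp (n*(θ - m))) (Iic m) := by
  have hn' : (1:ℝ) ≤ n := by exact_mod_cast hn
  have h : IntegrableOn (fun θ => Real.exp ((n:ℝ)*(θ - m))) (Iic m) := by
    have h0 : IntegrableOn (fun θ : ℝ => Real.exp θ * Real.exp (-m)) (Iic m) :=
      (integrableOn_exp_Iic m).mul_const _
    refine h0.mono' ((Real.continuous_exp.comp (by fun_prop)).aestronglyMeasurable) ?_
    filter_upwards [ae_restrict_mem measurableSet_Iic] with θ hθ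
    rw [Real.norm_eq_abs, abs_of_pos (Real.exp_pos _), ← Real.exp_add]
    have hθ' : θ ≤ m := hθ
    exact Real.exp_le_exp.2 (by nlinarith)
  exact h.const_mul _

private theorem dens_int (dens : ℝ → ℝ)
    (hprobdens : ∫ θ, dens θ = 1) : Integrable dens := by
  by_contra h
  rw [integral_undef h] at hprobdens
  norm_num at hprobdens

open Set in
private theorem intOn_g_mul (n : ℕ) (m : ℝ) {f : ℝ → ℝ} (hf : Integrable f)
    (hfm : AEStronglyMeasurable f volume) (hfnn : ∀ θ, 0 ≤ f θ) :
    IntegrableOn (fun θ => (n:ℝ) * Real.exp (n*(θ - m)) * f θ) (Iic m) := by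
  refine ((hf.const_mul (n:ℝ)).restrict (s := Iic m)).mono' ?_ ?_
  · exact (by fun_prop : Continuous fun θ => (n:ℝ) * Real.exp ((n:ℝ)*(θ - m))).aestronglyMeasurable.mul hfm.restrict
  · filter_upwards [ae_restrict_mem measurableSet_Iic] with θ hθ
    have hθ' : θ ≤ m := hθ
    rw [Real.norm_eq_abs, abs_mul, abs_mul]
    have h1 : Real.exp ((n:ℝ)*(θ - m)) ≤ 1 := by
      rw [← Real.exp_zero]
      exact Real.exp_le_exp.2 (by nlinarith [Nat.cast_nonneg (α := ℝ) n])
    rw [abs_of_nonneg (Real.exp_pos _).le, abs_of_nonneg (Nat.cast_nonneg (α := ℝ) n)]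
    calc (n:ℝ) * Real.exp ((n:ℝ)*(θ-m)) * |f θ| ≤ (n:ℝ) * 1 * |f θ| := by
          have : (0:ℝ) ≤ |f θ| := abs_nonneg _
          gcongr
      _ = (n:ℝ) * |f θ| := by ring
      _ ≤ (n:ℝ) * f θ := by rw [abs_of_nonneg (hfnn θ)]

open Set in
private theorem c_pos (dens : ℝ → ℝ) (hpos : ∀ θ, 0 < dens θ)
    (n : ℕ) (hn : 1 ≤ n) (m : ℝ)
    (hint : IntegrableOn (fun θ => (n:ℝ) * Real.exp (n*(θ - m)) * dens θ) (Iic m)) :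
    0 < ∫ θ in Iic m, (n:ℝ) * Real.exp (n*(θ - m)) * dens θ := by
  have hn' : (0:ℝ) < n := by exact_mod_cast hn
  have hnn : ∀ θ, 0 ≤ (n:ℝ) * Real.exp (n*(θ - m)) * dens θ := fun θ =>
    mul_nonneg (mul_nonneg hn'.le (Real.exp_pos _).le) (hpos θ).le
  rw [setIntegral_pos_iff_support_of_nonneg_ae (Eventually.of_forall hnn) hint]
  have : Function.support (fun θ => (n:ℝ) * Real.exp (n*(θ - m)) * dens θ) = univ := by
    ext θ; simp only [Function.mem_support, mem_univ, iff_true]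
    exact (mul_pos (mul_pos hn' (Real.exp_pos _)) (hpos θ)).ne'
  rw [this, univ_inter]
  simp [Real.volume_Iic]

open Set in
private theorem B1 (dens : ℝ → ℝ) (n : ℕ) (m : ℝ)
    (hgd : IntegrableOn (fun θ => (n:ℝ) * Real.exp (n*(θ - m)) * dens θ) (Iic m))
    (hg : IntegrableOn (fun θ => (n:ℝ) * Real.exp (n*(θ - m))) (Iic m))
    (hint1 : ∫ θ in Iic m, (n:ℝ) * Real.exp (n*(θ - m)) = 1) :
    |dens m - ∫ θ in Iic m, (n:ℝ) * Real.exp (n*(θ - m)) * dens θ|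
      ≤ ∫ θ in Iic m, (n:ℝ) * Real.exp (n*(θ - m)) * |dens θ - dens m| := by
  have key : dens m - (∫ θ in Iic m, (n:ℝ) * Real.exp (n*(θ - m)) * dens θ)
      = ∫ θ in Iic m, ((n:ℝ) * Real.exp (n*(θ - m)) * dens m
          - (n:ℝ) * Real.exp (n*(θ - m)) * dens θ) := by
    rw [integral_sub (hg.mul_const _) hgd, integral_mul_const, hint1, one_mul]
  rw [key]
  calc |∫ θ in Iic m, ((n:ℝ) * Real.exp (n*(θ - m)) * dens m
          - (n:ℝ) * Real.exp (n*(θ - m)) * dens θ)|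
      ≤ ∫ θ in Iic m, ‖(n:ℝ) * Real.exp (n*(θ - m)) * dens m
          - (n:ℝ) * Real.exp (n*(θ - m)) * dens θ‖ := by
        simpa using norm_integral_le_integral_norm (μ := volume.restrict (Iic m))
          (f := fun θ => (n:ℝ) * Real.exp (n*(θ - m)) * dens m
            - (n:ℝ) * Real.exp (n*(θ - m)) * dens θ)
    _ = ∫ θ in Iic m, (n:ℝ) * Real.exp (n*(θ - m)) * |dens θ - dens m| := by
        refine setIntegral_congr_fun measurableSet_Iic fun θ _ => ?_
        rw [Real.norm_eq_abs, ← mul_sub, abs_mul, abs_of_nonneg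
          (mul_nonneg (Nat.cast_nonneg _) (Real.exp_pos _).le), abs_sub_comm]

open Set in
private theorem B2 (dens : ℝ → ℝ) (n : ℕ) (m : ℝ) (A : Set ℝ)
    (c E : ℝ) (hc : c = ∫ θ in Iic m, (n:ℝ) * Real.exp (n*(θ - m)) * dens θ)
    (hE : E = ∫ θ in Iic m, (n:ℝ) * Real.exp (n*(θ - m)) * |dens θ - dens m|)
    (hcpos : 0 < c)
    (hgd : IntegrableOn (fun θ => (n:ℝ) * Real.exp (n*(θ - m)) * dens θ) (Iic m))
    (hgE : IntegrableOn (fun θ => (n:ℝ) * Real.exp (n*(θ - m)) * |dens θ - dens m|) (Iic m))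
    (hg : IntegrableOn (fun θ => (n:ℝ) * Real.exp (n*(θ - m))) (Iic m))
    (hint1 : ∫ θ in Iic m, (n:ℝ) * Real.exp (n*(θ - m)) = 1) :
    |(∫ θ in A ∩ Iic m, (n:ℝ) * Real.exp (n*(θ - m)) * dens θ)/c
        - ∫ θ in A ∩ Iic m, (n:ℝ) * Real.exp (n*(θ - m))|
      ≤ (E + |dens m - c|)/c := by
  set g : ℝ → ℝ := fun θ => (n:ℝ) * Real.exp (n*(θ - m)) with hgdef
  have hsub : A ∩ Iic m ⊆ Iic m := inter_subset_right
  have hgd' : IntegrableOn (fun θ => g θ * dens θ) (A ∩ Iic m) := hgd.mono_set hsub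
  have hg' : IntegrableOn g (A ∩ Iic m) := hg.mono_set hsub
  have hgnn : ∀ θ, 0 ≤ g θ := fun θ => mul_nonneg (Nat.cast_nonneg _) (Real.exp_pos _).le
  have step1 : (∫ θ in A ∩ Iic m, g θ * dens θ)/c - ∫ θ in A ∩ Iic m, g θ
      = ∫ θ in A ∩ Iic m, (g θ * dens θ / c - g θ) := by
    rw [integral_sub (hgd'.div_const c) hg', integral_div]
  have hd : IntegrableOn (fun θ => g θ * dens θ / c - g θ) (Iic m) :=
    (hgd.div_const c).sub hg
  have step2 : |∫ θ in A ∩ Iic m, (g θ * dens θ / c - g θ)|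
      ≤ ∫ θ in Iic m, |g θ * dens θ / c - g θ| := by
    calc |∫ θ in A ∩ Iic m, (g θ * dens θ / c - g θ)|
        ≤ ∫ θ in A ∩ Iic m, |g θ * dens θ / c - g θ| := by
          simpa using norm_integral_le_integral_norm
            (μ := volume.restrict (A ∩ Iic m)) (f := fun θ => g θ * dens θ / c - g θ)
      _ ≤ ∫ θ in Iic m, |g θ * dens θ / c - g θ| := by
          refine setIntegral_mono_set hd.abs
            (Eventually.of_forall fun θ => abs_nonneg _) (HasSubset.Subset.eventuallyLE hsub)
  have step3 : ∫ θ in Iic m, |g θ * dens θ / c - g θ|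
      ≤ (E + |dens m - c|)/c := by
    have pt : ∀ θ, |g θ * dens θ / c - g θ|
        ≤ (g θ * |dens θ - dens m| + g θ * |dens m - c|) / c := by
      intro θ
      have : g θ * dens θ / c - g θ = g θ * (dens θ - c) / c := by
        field_simp
      rw [this, abs_div, abs_of_pos hcpos, abs_mul, abs_of_nonneg (hgnn θ)]
      have habs : |dens θ - c| ≤ |dens θ - dens m| + |dens m - c| := abs_sub_le _ _ _
      have hnum : g θ * |dens θ - c| ≤ g θ * |dens θ - dens m| + g θ * |dens m - c| := by
        nlinarith [hgnn θ, abs_nonneg (dens θ - c)]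
      exact (div_le_div_iff_of_pos_right hcpos).mpr hnum
    have rhsInt : IntegrableOn
        (fun θ => (g θ * |dens θ - dens m| + g θ * |dens m - c|) / c) (Iic m) :=
      (hgE.add (hg.mul_const _)).div_const c
    calc ∫ θ in Iic m, |g θ * dens θ / c - g θ|
        ≤ ∫ θ in Iic m, (g θ * |dens θ - dens m| + g θ * |dens m - c|) / c :=
          integral_mono hd.abs rhsInt pt
      _ = (E + |dens m - c|)/c := by
          rw [integral_div, integral_add hgE (hg.mul_const _), integral_mul_const, hint1,
            one_mul, hE]
  calc _ = |∫ θ in A ∩ Iic m, (g θ * dens θ / c - g θ)| := by rw [step1]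
    _ ≤ _ := step2.trans step3

open Set in
private theorem prod_pexp (n : ℕ) (hn : 1 ≤ n) (x : Fin n → ℝ) (θ : ℝ) :
    (∏ i, pexp θ (x i))
      = Set.indicator (Iic (⨅ i, x i)) (fun θ => Real.exp ((n:ℝ)*θ - ∑ i, x i)) θ := by
  have hne : Nonempty (Fin n) := Fin.pos_iff_nonempty.mp hn
  by_cases h : θ ≤ ⨅ i, x i
  · have hall : ∀ i, θ ≤ x i := fun i =>
      h.trans (ciInf_le (Finite.bddBelow_range _) i)
    rw [indicator_of_mem (mem_Iic.2 h)]
    have : ∀ i, pexp θ (x i) = Real.exp (θ - x i) := by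
      intro i; rw [pexp, if_pos (hall i)]; congr 1; ring
    simp_rw [this, ← Real.exp_sum]
    congr 1
    rw [Finset.sum_sub_distrib, Finset.sum_const]
    simp [mul_comm]
  · rw [indicator_of_notMem (by simpa using h)]
    push_neg at h
    obtain ⟨i, hi⟩ := exists_lt_of_ciInf_lt h
    exact Finset.prod_eq_zero (Finset.mem_univ i) (by rw [pexp, if_neg (not_le.2 hi)])

open Set in
private theorem expNeg_eq (n : ℕ) (hn : 1 ≤ n) (m : ℝ) (A : Set ℝ) (hA : MeasurableSet A) :
    (expNeg m n A).toReal = ∫ θ in A ∩ Iic m, (n:ℝ) * Real.exp (n*(θ - m)) := by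
  have hfun : ∀ θ, (if θ ≤ m then (n:ℝ) * Real.exp (-(n:ℝ)*(m-θ)) else 0)
      = Set.indicator (Iic m) (fun θ => (n:ℝ) * Real.exp (n*(θ-m))) θ := by
    intro θ
    by_cases h : θ ≤ m
    · rw [if_pos h, indicator_of_mem (mem_Iic.2 h)]
      congr 1; ring
    · rw [if_neg h, indicator_of_notMem (by simpa using h)]
  have hind : Integrable (Set.indicator (Iic m)
      (fun θ => (n:ℝ) * Real.exp (n*(θ-m)))) volume :=
    (intOn_g n hn m).integrable_indicator measurableSet_Iic
  have hnn : 0 ≤ᵐ[volume.restrict A] Set.indicator (Iic m)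
      (fun θ => (n:ℝ) * Real.exp (n*(θ-m))) := by
    refine Eventually.of_forall fun θ => indicator_nonneg (fun y _ => ?_) θ
    exact mul_nonneg (Nat.cast_nonneg _) (Real.exp_pos _).le
  rw [expNeg, withDensity_apply _ hA]
  simp_rw [hfun]
  rw [← ofReal_integral_eq_lintegral_ofReal (hind.restrict) hnn,
    ENNReal.toReal_ofReal (integral_nonneg_of_ae hnn),
    setIntegral_indicator measurableSet_Iic]

open Set in
private theorem post_eq (dens : ℝ → ℝ) (hd : Integrable dens)
    (hcont : Continuous dens) (hpos : ∀ θ, 0 < dens θ)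
    (n : ℕ) (hn : 1 ≤ n) (x : Fin n → ℝ) (A : Set ℝ) (hA : MeasurableSet A) :
    postExp dens x A
      = (∫ θ in A ∩ Iic (⨅ i, x i), (n:ℝ) * Real.exp (n*(θ - ⨅ i, x i)) * dens θ)
        / ∫ θ in Iic (⨅ i, x i), (n:ℝ) * Real.exp (n*(θ - ⨅ i, x i)) * dens θ := by
  set m := ⨅ i, x i with hm
  set S := ∑ i, x i with hS
  have hn0 : ((n:ℝ)) ≠ 0 := by positivity
  have hprod : ∀ θ, (∏ i, pexp θ (x i)) * dens θ
      = Set.indicator (Iic m) (fun θ => Real.exp ((n:ℝ)*θ - S) * dens θ) θ := by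
    intro θ
    rw [prod_pexp n hn]
    by_cases h : θ ∈ Iic m
    · rw [indicator_of_mem h, indicator_of_mem h]
    · rw [indicator_of_notMem h, indicator_of_notMem h, zero_mul]
  rw [postExp]
  simp_rw [hprod]
  rw [setIntegral_indicator measurableSet_Iic, integral_indicator measurableSet_Iic]
  set k := Real.exp ((n:ℝ)*m - S) / n with hk
  have hkpos : 0 < k := div_pos (Real.exp_pos _) (by positivity)
  have hF : ∀ θ, Real.exp ((n:ℝ)*θ - S) * dens θ
      = k * ((n:ℝ) * Real.exp ((n:ℝ)*(θ-m)) * dens θ) := by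
    intro θ
    have e : Real.exp ((n:ℝ)*m - S) * Real.exp ((n:ℝ)*(θ-m))
        = Real.exp ((n:ℝ)*θ - S) := by rw [← Real.exp_add]; congr 1; ring
    rw [hk, div_mul_eq_mul_div, eq_div_iff hn0]
    linear_combination (-(n:ℝ)) * dens θ * e
  simp_rw [hF]
  rw [integral_const_mul, integral_const_mul, mul_div_mul_left _ _ hkpos.ne']

open Set in

private theorem unif_E (dens : ℝ → ℝ) (hcont : Continuous dens) (hpos : ∀ θ, 0 < dens θ)
    (hd : Integrable dens) (hprobdens : ∫ θ, dens θ = 1) (θ₀ : ℝ) {ε : ℝ} (hε : 0 < ε) :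
    ∃ N : ℕ, 1 ≤ N ∧ ∀ n, N ≤ n → ∀ m ∈ Icc θ₀ (θ₀+1),
      (∫ θ in Iic m, (n:ℝ) * Real.exp (n*(θ - m)) * |dens θ - dens m|) ≤ ε := by
  -- uniform continuity on K2 = Icc (θ₀-1) (θ₀+1)
  have hK2 : IsCompact (Icc (θ₀-1) (θ₀+1)) := isCompact_Icc
  have huc : UniformContinuousOn dens (Icc (θ₀-1) (θ₀+1)) :=
    hK2.uniformContinuousOn_of_continuous hcont.continuousOn
  obtain ⟨δ0, hδ0, hδ0'⟩ := (Metric.uniformContinuousOn_iff.1 huc) (ε/2) (by linarith)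
  set δ : ℝ := min (δ0/2) 1 with hδdef
  have hδpos : 0 < δ := lt_min (by linarith) one_pos
  have hδ1 : δ ≤ 1 := min_le_right _ _
  have hδlt : δ < δ0 := (min_le_left _ _).trans_lt (by linarith)
  -- bound on dens over the compact
  obtain ⟨Mb, hMb⟩ := hK2.exists_bound_of_continuousOn hcont.continuousOn
  have hMb0 : 0 ≤ Mb := le_trans (norm_nonneg _) (hMb θ₀ (by constructor <;> linarith))
  -- tail: (n + Mb) * exp (-n δ) → 0
  have htail : Tendsto (fun n : ℕ => ((n:ℝ) + Mb) * Real.exp (-(n:ℝ)*δ)) atTop (𝓝 0) := by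
    have h1 : Tendsto (fun t : ℝ => (t/δ + Mb) * Real.exp (-t)) atTop (𝓝 0) := by
      have h2 := Real.tendsto_pow_mul_exp_neg_atTop_nhds_zero 1
      have h3 := Real.tendsto_pow_mul_exp_neg_atTop_nhds_zero 0
      have := (h2.const_mul (1/δ)).add (h3.const_mul Mb)
      simp only [pow_one, pow_zero, one_mul, mul_zero, add_zero] at this
      refine this.congr fun t => by ring
    have h4 : Tendsto (fun n : ℕ => (n:ℝ)*δ) atTop atTop :=
      (tendsto_natCast_atTop_atTop).atTop_mul_const hδpos
    have := h1.comp h4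
    refine this.congr fun n => ?_
    simp only [Function.comp_apply]
    rw [mul_div_cancel_right₀ _ hδpos.ne', neg_mul]
  have hev : ∀ᶠ n : ℕ in atTop, ((n:ℝ) + Mb) * Real.exp (-(n:ℝ)*δ) ≤ ε/2 :=
    htail.eventually (eventually_le_nhds (by linarith) : ∀ᶠ y in 𝓝 (0:ℝ), y ≤ ε/2)
  obtain ⟨N0, hN0⟩ := eventually_atTop.1 hev
  refine ⟨max N0 1, le_max_right _ _, fun n hn m hm => ?_⟩
  have hn1 : 1 ≤ n := le_trans (le_max_right _ _) hn
  have hnN0 : N0 ≤ n := le_trans (le_max_left _ _) hn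
  have hn' : (1:ℝ) ≤ n := by exact_mod_cast hn1
  set g : ℝ → ℝ := fun θ => (n:ℝ) * Real.exp (n*(θ - m)) with hgdef
  have hgnn : ∀ θ, 0 ≤ g θ := fun θ => mul_nonneg (Nat.cast_nonneg _) (Real.exp_pos _).le
  have habs : Continuous fun θ => |dens θ - dens m| := (hcont.sub continuous_const).abs
  have hgle : ∀ θ ∈ Iic m, g θ ≤ n := by
    intro θ hθ
    have : θ ≤ m := hθ
    calc g θ ≤ (n:ℝ) * 1 := by
          refine mul_le_mul_of_nonneg_left ?_ (Nat.cast_nonneg _)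
          rw [← Real.exp_zero]; exact Real.exp_le_exp.2 (by nlinarith)
      _ = n := mul_one _
  have hgE : IntegrableOn (fun θ => g θ * |dens θ - dens m|) (Iic m) := by
    have h1 : IntegrableOn (fun θ => (n:ℝ) * dens θ + dens m * g θ) (Iic m) :=
      ((hd.const_mul _).restrict).add ((intOn_g n hn1 m).const_mul _)
    refine h1.mono' (((by fun_prop : Continuous g).aestronglyMeasurable.mul
      habs.aestronglyMeasurable).restrict) ?_
    filter_upwards [ae_restrict_mem measurableSet_Iic] with θ hθ
    rw [Real.norm_eq_abs, abs_mul, abs_of_nonneg (hgnn θ), abs_abs]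
    have h2 : |dens θ - dens m| ≤ dens θ + dens m := by
      calc |dens θ - dens m| ≤ |dens θ| + |dens m| := abs_sub _ _
        _ = dens θ + dens m := by
            rw [abs_of_pos (hpos θ), abs_of_pos (hpos m)]
    nlinarith [hgle θ hθ, hgnn θ, (hpos θ), (hpos m)]
  -- split the integral
  have hmem_m : m ∈ Icc (θ₀-1) (θ₀+1) := ⟨by linarith [hm.1], hm.2⟩
  have hdm : dens m ≤ Mb := by
    have := hMb m hmem_m; rwa [Real.norm_eq_abs, abs_of_pos (hpos m)] at this
  have hsplit : (∫ θ in Iic m, g θ * |dens θ - dens m|)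
      = (∫ θ in Iic (m-δ), g θ * |dens θ - dens m|)
        + ∫ θ in Ioc (m-δ) m, g θ * |dens θ - dens m| := by
    rw [← setIntegral_union (Iic_disjoint_Ioc le_rfl) measurableSet_Ioc
      (hgE.mono_set (Iic_subset_Iic.2 (by linarith))) (hgE.mono_set Ioc_subset_Iic_self),
      Iic_union_Ioc_eq_Iic (by linarith)]
  -- term 2
  have habsnn : ∀ θ, 0 ≤ g θ * |dens θ - dens m| := fun θ =>
    mul_nonneg (hgnn θ) (abs_nonneg _)
  have t2 : (∫ θ in Ioc (m-δ) m, g θ * |dens θ - dens m|) ≤ ε/2 := by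
    have hptw : ∀ θ ∈ Ioc (m-δ) m, g θ * |dens θ - dens m| ≤ g θ * (ε/2) := by
      intro θ hθ
      refine mul_le_mul_of_nonneg_left (le_of_lt ?_) (hgnn θ)
      have hθK : θ ∈ Icc (θ₀-1) (θ₀+1) :=
        ⟨by linarith [hθ.1, hm.1, hδ1], by linarith [hθ.2, hm.2]⟩
      have hdist : dist θ m < δ0 := by
        rw [Real.dist_eq, abs_lt]
        constructor <;> [linarith [hθ.1, hδlt]; linarith [hθ.2, hδ0]]
      have := hδ0' θ hθK m hmem_m hdist
      rwa [Real.dist_eq] at this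
    calc (∫ θ in Ioc (m-δ) m, g θ * |dens θ - dens m|)
        ≤ ∫ θ in Ioc (m-δ) m, g θ * (ε/2) :=
          setIntegral_mono_on (hgE.mono_set Ioc_subset_Iic_self)
            (((intOn_g n hn1 m).mono_set Ioc_subset_Iic_self).mul_const _)
            measurableSet_Ioc hptw
      _ = (∫ θ in Ioc (m-δ) m, g θ) * (ε/2) := integral_mul_const _ _
      _ ≤ 1 * (ε/2) := by
          refine mul_le_mul_of_nonneg_right ?_ (by linarith)
          rw [← int_g n hn1 m]
          exact setIntegral_mono_set (intOn_g n hn1 m)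
            (Eventually.of_forall fun θ => hgnn θ)
            (HasSubset.Subset.eventuallyLE Ioc_subset_Iic_self)
      _ = ε/2 := one_mul _
  -- term 1
  have hgsmall : ∀ θ ∈ Iic (m-δ), g θ ≤ (n:ℝ) * Real.exp (-(n:ℝ)*δ) := by
    intro θ hθ
    have hθ' : θ ≤ m - δ := hθ
    refine mul_le_mul_of_nonneg_left (Real.exp_le_exp.2 (by nlinarith)) (Nat.cast_nonneg _)
  have hgdecomp : ∀ θ, g θ = Real.exp (-(n:ℝ)*δ) * ((n:ℝ) * Real.exp (n*(θ - (m-δ)))) := by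
    intro θ
    simp only [hgdef]
    rw [mul_comm (Real.exp _), mul_assoc, ← Real.exp_add]
    congr 2; ring
  have hintg_small : (∫ θ in Iic (m-δ), g θ) = Real.exp (-(n:ℝ)*δ) := by
    calc (∫ θ in Iic (m-δ), g θ)
        = ∫ θ in Iic (m-δ), Real.exp (-(n:ℝ)*δ) * ((n:ℝ) * Real.exp (n*(θ - (m-δ)))) :=
          setIntegral_congr_fun measurableSet_Iic fun θ _ => hgdecomp θ
      _ = Real.exp (-(n:ℝ)*δ) * ∫ θ in Iic (m-δ), (n:ℝ) * Real.exp (n*(θ - (m-δ))) :=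
          integral_const_mul _ _
      _ = Real.exp (-(n:ℝ)*δ) := by rw [int_g n hn1 (m-δ), mul_one]
  have hgd_small : (∫ θ in Iic (m-δ), g θ * dens θ) ≤ (n:ℝ) * Real.exp (-(n:ℝ)*δ) := by
    calc (∫ θ in Iic (m-δ), g θ * dens θ)
        ≤ ∫ θ in Iic (m-δ), ((n:ℝ) * Real.exp (-(n:ℝ)*δ)) * dens θ := by
          refine setIntegral_mono_on
            ((intOn_g_mul n m hd hcont.aestronglyMeasurable fun θ => (hpos θ).le).mono_set
              (Iic_subset_Iic.2 (by linarith)))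
            ((hd.const_mul _).restrict) measurableSet_Iic fun θ hθ => ?_
          exact mul_le_mul_of_nonneg_right (hgsmall θ hθ) (hpos θ).le
      _ = ((n:ℝ) * Real.exp (-(n:ℝ)*δ)) * ∫ θ in Iic (m-δ), dens θ := integral_const_mul _ _
      _ ≤ ((n:ℝ) * Real.exp (-(n:ℝ)*δ)) * 1 := by
          refine mul_le_mul_of_nonneg_left ?_
            (mul_nonneg (Nat.cast_nonneg _) (Real.exp_pos _).le)
          rw [← hprobdens]
          exact setIntegral_le_integral hd (Eventually.of_forall fun θ => (hpos θ).le)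
      _ = (n:ℝ) * Real.exp (-(n:ℝ)*δ) := mul_one _
  have t1 : (∫ θ in Iic (m-δ), g θ * |dens θ - dens m|)
      ≤ ((n:ℝ) + Mb) * Real.exp (-(n:ℝ)*δ) := by
    have hptw : ∀ θ, g θ * |dens θ - dens m| ≤ g θ * dens θ + dens m * g θ := by
      intro θ
      have h2 : |dens θ - dens m| ≤ dens θ + dens m := by
        calc |dens θ - dens m| ≤ |dens θ| + |dens m| := abs_sub _ _
          _ = dens θ + dens m := by rw [abs_of_pos (hpos θ), abs_of_pos (hpos m)]
      nlinarith [hgnn θ]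
    calc (∫ θ in Iic (m-δ), g θ * |dens θ - dens m|)
        ≤ ∫ θ in Iic (m-δ), (g θ * dens θ + dens m * g θ) := by
          refine integral_mono (hgE.mono_set (Iic_subset_Iic.2 (by linarith)))
            (((intOn_g_mul n m hd hcont.aestronglyMeasurable fun θ => (hpos θ).le).mono_set
              (Iic_subset_Iic.2 (by linarith))).add
              (((intOn_g n hn1 m).mono_set (Iic_subset_Iic.2 (by linarith))).const_mul _))
            fun θ => hptw θ
      _ = (∫ θ in Iic (m-δ), g θ * dens θ) + dens m * ∫ θ in Iic (m-δ), g θ := by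
          rw [integral_add
            ((intOn_g_mul n m hd hcont.aestronglyMeasurable fun θ => (hpos θ).le).mono_set
              (Iic_subset_Iic.2 (by linarith)))
            (((intOn_g n hn1 m).mono_set (Iic_subset_Iic.2 (by linarith))).const_mul _),
            integral_const_mul]
      _ ≤ (n:ℝ) * Real.exp (-(n:ℝ)*δ) + Mb * Real.exp (-(n:ℝ)*δ) := by
          refine add_le_add hgd_small ?_
          rw [hintg_small]
          exact mul_le_mul_of_nonneg_right hdm (Real.exp_pos _).le
      _ = ((n:ℝ) + Mb) * Real.exp (-(n:ℝ)*δ) := by ring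
  have := hN0 n hnN0
  rw [hsplit]
  linarith


open Set in
private theorem pexp_eq (θ₀ : ℝ) :
    pexp θ₀ = Set.indicator (Ici θ₀) (fun x => Real.exp (θ₀ - x)) := by
  funext x
  rw [pexp]
  by_cases h : θ₀ ≤ x
  · rw [if_pos h, indicator_of_mem (mem_Ici.2 h)]; congr 1; ring
  · rw [if_neg h, indicator_of_notMem (by simpa using h)]

open Set in
private theorem pexp_intOn (θ₀ a : ℝ) :
    IntegrableOn (fun x => Real.exp (θ₀ - x)) (Ici a) := by
  have h : IntegrableOn (fun x => Real.exp θ₀ * Real.exp (-(1:ℝ) * x)) (Ioi a) :=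
    (exp_neg_integrableOn_Ioi a one_pos).const_mul _
  rw [integrableOn_Ici_iff_integrableOn_Ioi]
  refine h.congr_fun (fun x _ => ?_) measurableSet_Ioi
  simp only [← Real.exp_add]; congr 1; ring

private theorem pexp_integrable (θ₀ : ℝ) : Integrable (pexp θ₀) := by
  rw [pexp_eq]
  exact (pexp_intOn θ₀ θ₀).integrable_indicator measurableSet_Ici

private theorem pexp_nonneg (θ₀ x : ℝ) : 0 ≤ pexp θ₀ x := by
  rw [pexp]; split <;> positivity

open Set in
private theorem int_exp_Ioi (θ₀ a : ℝ) :
    ∫ x in Ioi a, Real.exp (θ₀ - x) = Real.exp (θ₀ - a) := by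
  have h : ∀ x : ℝ, Real.exp (θ₀ - x) = Real.exp θ₀ * Real.exp (-x) := fun x => by
    rw [← Real.exp_add, sub_eq_add_neg]
  simp_rw [h]
  rw [integral_const_mul, integral_exp_neg_Ioi, ← Real.exp_add]

open Set in
private theorem int_pexp_Ioi (θ₀ a : ℝ) (ha : θ₀ ≤ a) :
    ∫ x in Ioi a, pexp θ₀ x = Real.exp (θ₀ - a) := by
  have h : ∀ x ∈ Ioi a, pexp θ₀ x = Real.exp (θ₀ - x) := by
    intro x hx
    rw [pexp, if_pos (ha.trans (le_of_lt hx))]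
    congr 1; ring
  rw [setIntegral_congr_fun measurableSet_Ioi h, int_exp_Ioi]

open Set in
private theorem Pexp_apply (θ₀ : ℝ) (s : Set ℝ) (hs : MeasurableSet s) :
    Pexp θ₀ s = ENNReal.ofReal (∫ x in s, pexp θ₀ x) := by
  rw [Pexp, withDensity_apply _ hs,
    ← ofReal_integral_eq_lintegral_ofReal ((pexp_integrable θ₀).restrict)
      (Eventually.of_forall fun x => pexp_nonneg θ₀ x)]

open Set in
private theorem Pexp_prob (θ₀ : ℝ) : IsProbabilityMeasure (Pexp θ₀) := by
  constructor
  rw [Pexp_apply θ₀ _ MeasurableSet.univ, setIntegral_univ, pexp_eq,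
    integral_indicator measurableSet_Ici, integral_Ici_eq_integral_Ioi,
    int_exp_Ioi θ₀ θ₀, sub_self, Real.exp_zero, ENNReal.ofReal_one]

open Set in
private theorem Pexp_Iio (θ₀ : ℝ) : Pexp θ₀ (Iio θ₀) = 0 := by
  rw [Pexp_apply θ₀ _ measurableSet_Iio]
  have h : ∀ x ∈ Iio θ₀, pexp θ₀ x = 0 := fun x hx => by
    rw [pexp, if_neg (not_le.2 hx)]
  rw [setIntegral_congr_fun measurableSet_Iio h]
  simp

open Set in
private theorem Pexp_Ioi (θ₀ : ℝ) : Pexp θ₀ (Ioi (θ₀+1)) = ENNReal.ofReal (Real.exp (-1)) := by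
  rw [Pexp_apply θ₀ _ measurableSet_Ioi, int_pexp_Ioi θ₀ _ (by linarith)]
  congr 1; ring_nf

/-- irregular posterior convergence for the shifted exponential family:
the posterior converges in total variation to `Exp⁻_{X₍₁₎, n}`, in `P_{θ₀}`-probability. -/
theorem irregular_posterior_convergence_exponential
    (θ₀ : ℝ) (dens : ℝ → ℝ) (hcont : Continuous dens) (hpos : ∀ θ, 0 < dens θ)
    (hprobdens : ∫ θ, dens θ = 1) :
    smallOP (Pexp θ₀) (fun n x =>
      ⨆ A : Set ℝ, ⨆ _ : MeasurableSet A,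
        |postExp dens x A - (expNeg (⨅ i, x i) n A).toReal|) := by
  classical
  intro ε hε
  have hd : Integrable dens := dens_int dens hprobdens
  haveI : IsProbabilityMeasure (Pexp θ₀) := Pexp_prob θ₀
  -- minimum of the prior density on the relevant compact
  obtain ⟨mθ, hmθmem, hmθ⟩ := isCompact_Icc.exists_isMinOn
    (Set.nonempty_Icc.2 (by linarith) : (Set.Icc θ₀ (θ₀+1)).Nonempty) hcont.continuousOn
  set a : ℝ := dens mθ with ha_def
  have ha : 0 < a := hpos mθ
  set εE : ℝ := min (a/2) (ε * a / 8) with hεE_def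
  have hεEpos : 0 < εE := lt_min (by linarith) (by positivity)
  obtain ⟨N, hN1, hNs⟩ := unif_E dens hcont hpos hd hprobdens θ₀ hεEpos
  -- the deterministic estimate for good samples
  have key : ∀ n : ℕ, N ≤ n → ∀ x : Fin n → ℝ, (∀ i, θ₀ ≤ x i) → (⨅ i, x i) ≤ θ₀+1 →
      ¬ (ε ≤ abs (⨆ A : Set ℝ, ⨆ _ : MeasurableSet A,
          abs (postExp dens x A - (expNeg (⨅ i, x i) n A).toReal))) := by
    intro n hn x hx1 hx2
    have hn1 : 1 ≤ n := le_trans hN1 hn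
    haveI : Nonempty (Fin n) := Fin.pos_iff_nonempty.mp hn1
    set m : ℝ := ⨅ i, x i with hm_def
    have hm1 : θ₀ ≤ m := le_ciInf hx1
    have hmIcc : m ∈ Set.Icc θ₀ (θ₀+1) := ⟨hm1, hx2⟩
    set c : ℝ := ∫ θ in Set.Iic m, (n:ℝ) * Real.exp (n*(θ - m)) * dens θ with hc_def
    set E : ℝ := ∫ θ in Set.Iic m, (n:ℝ) * Real.exp (n*(θ - m)) * |dens θ - dens m|
      with hE_def
    have hgd : IntegrableOn (fun θ => (n:ℝ) * Real.exp (n*(θ - m)) * dens θ) (Set.Iic m) :=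
      intOn_g_mul n m hd hcont.aestronglyMeasurable fun θ => (hpos θ).le
    have hg : IntegrableOn (fun θ => (n:ℝ) * Real.exp (n*(θ - m))) (Set.Iic m) :=
      intOn_g n hn1 m
    have hgE : IntegrableOn
        (fun θ => (n:ℝ) * Real.exp (n*(θ - m)) * |dens θ - dens m|) (Set.Iic m) := by
      have h1 : IntegrableOn (fun θ => (n:ℝ) * dens θ + dens m
          * ((n:ℝ) * Real.exp (n*(θ - m)))) (Set.Iic m) :=
        ((hd.const_mul _).restrict).add (hg.const_mul _)
      refine h1.mono' (((by fun_prop :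
          Continuous fun θ => (n:ℝ) * Real.exp ((n:ℝ)*(θ - m))).aestronglyMeasurable.mul
        ((hcont.sub continuous_const).abs.aestronglyMeasurable)).restrict) ?_
      filter_upwards [ae_restrict_mem measurableSet_Iic] with θ hθ
      have hθ' : θ ≤ m := hθ
      have hgle : (n:ℝ) * Real.exp (n*(θ - m)) ≤ n := by
        calc (n:ℝ) * Real.exp (n*(θ - m)) ≤ (n:ℝ) * 1 := by
              refine mul_le_mul_of_nonneg_left ?_ (Nat.cast_nonneg _)
              rw [← Real.exp_zero]
              exact Real.exp_le_exp.2 (by nlinarith [Nat.cast_nonneg (α := ℝ) n])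
          _ = n := mul_one _
      have hgnn : (0:ℝ) ≤ (n:ℝ) * Real.exp (n*(θ - m)) := by positivity
      rw [Real.norm_eq_abs, abs_mul, abs_of_nonneg hgnn, abs_abs]
      have h2 : |dens θ - dens m| ≤ dens θ + dens m := by
        calc |dens θ - dens m| ≤ |dens θ| + |dens m| := abs_sub _ _
          _ = dens θ + dens m := by rw [abs_of_pos (hpos θ), abs_of_pos (hpos m)]
      nlinarith [hpos θ, hpos m]
    have hint1 : ∫ θ in Set.Iic m, (n:ℝ) * Real.exp (n*(θ - m)) = 1 := int_g n hn1 m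
    have hcpos : 0 < c := c_pos dens hpos n hn1 m hgd
    have hEle : E ≤ εE := hNs n hn m hmIcc
    have hB1 : |dens m - c| ≤ E := B1 dens n m hgd hg hint1
    have hdm : a ≤ dens m := hmθ hmIcc
    have hclb : a/2 ≤ c := by
      have h1 : εE ≤ a/2 := min_le_left _ _
      have h2 : dens m - c ≤ E := (abs_le.1 hB1).2
      linarith
    have hbound : (E + |dens m - c|)/c ≤ ε/2 := by
      rw [div_le_iff₀ hcpos]
      have h1 : εE ≤ ε * a / 8 := min_le_right _ _
      have h2 : |dens m - c| ≤ εE := hB1.trans hEle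
      nlinarith
    have hA : ∀ A : Set ℝ, MeasurableSet A →
        |postExp dens x A - (expNeg m n A).toReal| ≤ ε/2 := by
      intro A hA
      rw [post_eq dens hd hcont hpos n hn1 x A hA, expNeg_eq n hn1 m A hA]
      exact (B2 dens n m A c E hc_def hE_def hcpos hgd hgE hg hint1).trans hbound
    have hRle : (⨆ A : Set ℝ, ⨆ _ : MeasurableSet A,
        |postExp dens x A - (expNeg m n A).toReal|) ≤ ε/2 := by
      refine Real.iSup_le (fun A => Real.iSup_le (fun hAm => hA A hAm) (by linarith))
        (by linarith)
    have hRnn : 0 ≤ ⨆ A : Set ℝ, ⨆ _ : MeasurableSet A,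
        |postExp dens x A - (expNeg m n A).toReal| :=
      Real.iSup_nonneg fun A => Real.iSup_nonneg fun _ => abs_nonneg _
    rw [not_le, abs_of_nonneg hRnn]
    linarith
  -- the bad events
  have hsub : ∀ n : ℕ, N ≤ n →
      {x : Fin n → ℝ | ε ≤ abs (⨆ A : Set ℝ, ⨆ _ : MeasurableSet A,
          abs (postExp dens x A - (expNeg (⨅ i, x i) n A).toReal))}
        ⊆ (⋃ i : Fin n, {x : Fin n → ℝ | x i < θ₀})
          ∪ {x : Fin n → ℝ | ∀ i, θ₀ + 1 < x i} := by
    intro n hn x hxmem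
    by_contra hcon
    rw [Set.mem_union, not_or] at hcon
    obtain ⟨h1, h2⟩ := hcon
    have hx1 : ∀ i, θ₀ ≤ x i := by
      intro i
      by_contra hlt
      exact h1 (Set.mem_iUnion.2 ⟨i, by simpa using not_le.1 hlt⟩)
    obtain ⟨i, hi⟩ : ∃ i, x i ≤ θ₀ + 1 := by
      simp only [Set.mem_setOf_eq] at h2
      push_neg at h2
      exact h2
    have hx2 : (⨅ i, x i) ≤ θ₀ + 1 :=
      (ciInf_le (Set.Finite.bddBelow (Set.finite_range x)) i).trans hi
    exact key n hn x hx1 hx2 hxmem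
  have hbad1 : ∀ n : ℕ, jointLaw (Pexp θ₀) n (⋃ i : Fin n, {x : Fin n → ℝ | x i < θ₀}) = 0 := by
    intro n
    refine measure_iUnion_null fun i => ?_
    have heq : {x : Fin n → ℝ | x i < θ₀}
        = Set.pi Set.univ (Function.update (fun _ : Fin n => (Set.univ : Set ℝ)) i
            (Set.Iio θ₀)) := by
      ext y
      simp only [Set.mem_setOf_eq, Set.mem_pi, Set.mem_univ, forall_true_left,
        Function.update_apply]
      constructor
      · intro h j
        by_cases hj : j = i
        · subst hj; simp [h]
        · simp [hj]
      · intro h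
        have := h i
        simpa using this
    rw [jointLaw, heq, Measure.pi_pi]
    exact Finset.prod_eq_zero (Finset.mem_univ i)
      (by rw [Function.update_self, Pexp_Iio])
  have hbad2 : ∀ n : ℕ, jointLaw (Pexp θ₀) n {x : Fin n → ℝ | ∀ i, θ₀ + 1 < x i}
      = (ENNReal.ofReal (Real.exp (-1)))^n := by
    intro n
    have heq : {x : Fin n → ℝ | ∀ i, θ₀ + 1 < x i}
        = Set.pi Set.univ (fun _ : Fin n => Set.Ioi (θ₀+1)) := by
      ext y
      simp [Set.mem_pi]
    rw [jointLaw, heq, Measure.pi_pi]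
    simp [Pexp_Ioi θ₀]
  -- squeeze
  have hpow : Tendsto (fun n : ℕ => (ENNReal.ofReal (Real.exp (-1)))^n) atTop (𝓝 0) := by
    refine ENNReal.tendsto_pow_atTop_nhds_zero_of_lt_one ?_
    rw [← ENNReal.ofReal_one]
    exact ENNReal.ofReal_lt_ofReal_iff_of_nonneg (Real.exp_pos _).le |>.2
      (Real.exp_lt_one_iff.2 (by norm_num)) |>.trans_le le_rfl
  refine tendsto_of_tendsto_of_tendsto_of_le_of_le' tendsto_const_nhds hpow
    (Eventually.of_forall fun n => by positivity) ?_
  filter_upwards [eventually_ge_atTop N] with n hn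
  calc jointLaw (Pexp θ₀) n _
      ≤ jointLaw (Pexp θ₀) n ((⋃ i : Fin n, {x : Fin n → ℝ | x i < θ₀})
          ∪ {x : Fin n → ℝ | ∀ i, θ₀ + 1 < x i}) := measure_mono (hsub n hn)
    _ ≤ jointLaw (Pexp θ₀) n (⋃ i : Fin n, {x : Fin n → ℝ | x i < θ₀})
          + jointLaw (Pexp θ₀) n {x : Fin n → ℝ | ∀ i, θ₀ + 1 < x i} := measure_union_le _ _
    _ = (ENNReal.ofReal (Real.exp (-1)))^n := by rw [hbad1 n, hbad2 n, zero_add]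

end Paper
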